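/- For any μ_1, μ_2 ∈ C[0,1] and σ_1, σ_2 with 0 < σ_1 ≤ σ_2, the L¹ distance between the induced densities satisfies ‖f_{μ_1,σ_1} - f_{μ_2,σ_2}‖_1 ≤ (2/π)^{1/2} ‖μ_1 - μ_2‖_∞ / σ_1 + 3(σ_2 - σ_1)/σ_1. -/

import Mathlib

open MeasureTheory Real Set

/-- The Gaussian density with mean 0 and standard deviation `σ`. -/
noncomputable def phi (σ u : ℝ) : ℝ :=
  (Real.sqrt (2 * Real.pi * σ ^ 2))⁻¹ * Real.exp (-u ^ 2 / (2 * σ ^ 2))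

/-- `f_{μ,σ}(y) = ∫_0^1 φ_σ(y - μ x) dx`. -/
noncomputable def fdens (μ : ℝ → ℝ) (σ y : ℝ) : ℝ :=
  ∫ x in Set.Icc (0:ℝ) 1, phi σ (y - μ x)

lemma phi_nonneg (σ u : ℝ) : 0 ≤ phi σ u := by unfold phi; positivity

lemma phi_cont (σ : ℝ) : Continuous (phi σ) := by
  unfold phi
  fun_prop

lemma sqrt_two_pi_sq {σ : ℝ} (hσ : 0 ≤ σ) :
    Real.sqrt (2 * Real.pi * σ ^ 2) = Real.sqrt (2 * Real.pi) * σ := by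
  rw [Real.sqrt_mul (by positivity), Real.sqrt_sq hσ]

lemma integrable_exp_gauss {σ : ℝ} (hσ : 0 < σ) :
    Integrable (fun u : ℝ => Real.exp (-u ^ 2 / (2 * σ ^ 2))) := by
  have h : (fun u : ℝ => Real.exp (-u ^ 2 / (2 * σ ^ 2)))
      = fun u : ℝ => Real.exp (-((2 * σ ^ 2)⁻¹) * u ^ 2) := by
    ext u; congr 1; field_simp
  rw [h]
  exact integrable_exp_neg_mul_sq (by positivity)

lemma integral_exp_gauss {σ : ℝ} (hσ : 0 < σ) :
    ∫ u : ℝ, Real.exp (-u ^ 2 / (2 * σ ^ 2)) = Real.sqrt (2 * Real.pi) * σ := by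
  have h : (fun u : ℝ => Real.exp (-u ^ 2 / (2 * σ ^ 2)))
      = fun u : ℝ => Real.exp (-((2 * σ ^ 2)⁻¹) * u ^ 2) := by
    ext u; congr 1; field_simp
  rw [h, integral_gaussian, ← sqrt_two_pi_sq hσ.le]
  congr 1
  field_simp

lemma integrable_phi {σ : ℝ} (hσ : 0 < σ) : Integrable (phi σ) :=
  (integrable_exp_gauss hσ).const_mul _

lemma integral_phi {σ : ℝ} (hσ : 0 < σ) : ∫ u : ℝ, phi σ u = 1 := by
  unfold phi
  rw [integral_const_mul, integral_exp_gauss hσ, sqrt_two_pi_sq hσ.le]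
  field_simp

lemma phi_anti {σ : ℝ} (hσ : 0 < σ) {u v : ℝ} (h : u ^ 2 ≤ v ^ 2) :
    phi σ v ≤ phi σ u := by
  unfold phi
  have : Real.exp (-v ^ 2 / (2 * σ ^ 2)) ≤ Real.exp (-u ^ 2 / (2 * σ ^ 2)) := by
    apply Real.exp_le_exp.2
    exact (div_le_div_iff_of_pos_right (by positivity)).2 (by linarith)
  have hc : (0:ℝ) ≤ (Real.sqrt (2 * Real.pi * σ ^ 2))⁻¹ := by positivity
  exact mul_le_mul_of_nonneg_left this hc

lemma phi_le_zero {σ : ℝ} (hσ : 0 < σ) (u : ℝ) : phi σ u ≤ phi σ 0 :=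
  phi_anti hσ (by simpa using sq_nonneg u)

lemma lemB {σ1 σ2 : ℝ} (hσ1 : 0 < σ1) (h12 : σ1 ≤ σ2) :
    ∫ u : ℝ, |phi σ1 u - phi σ2 u| ≤ 2 * (σ2 - σ1) / σ1 := by
  have hσ2 : 0 < σ2 := hσ1.trans_le h12
  set s := Real.sqrt (2 * Real.pi) with hs
  have hs0 : 0 < s := Real.sqrt_pos.2 (by positivity)
  set e1 : ℝ → ℝ := fun u => Real.exp (-u ^ 2 / (2 * σ1 ^ 2)) with he1
  set e2 : ℝ → ℝ := fun u => Real.exp (-u ^ 2 / (2 * σ2 ^ 2)) with he2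
  have hint1 : Integrable e1 := integrable_exp_gauss hσ1
  have hint2 : Integrable e2 := integrable_exp_gauss hσ2
  have hee : ∀ u, e1 u ≤ e2 u := by
    intro u
    apply Real.exp_le_exp.2
    rw [div_le_div_iff₀ (by positivity) (by positivity)]
    have hσsq : σ1 ^ 2 ≤ σ2 ^ 2 := by nlinarith
    nlinarith [mul_le_mul_of_nonneg_left hσsq (sq_nonneg u)]
  have hpt : ∀ u, |phi σ1 u - phi σ2 u| ≤
      (s * σ1)⁻¹ * (e2 u - e1 u) + (s * σ1)⁻¹ * (1 - σ1 / σ2) * e2 u := by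
    intro u
    have hphi1 : phi σ1 u = (s * σ1)⁻¹ * e1 u := by
      rw [phi, sqrt_two_pi_sq hσ1.le]
    have hphi2 : phi σ2 u = (s * σ1)⁻¹ * ((σ1 / σ2) * e2 u) := by
      have hfrac : (s * σ2)⁻¹ = (s * σ1)⁻¹ * (σ1 / σ2) := by
        field_simp
      rw [phi, sqrt_two_pi_sq hσ2.le, ← hs, hfrac]
      simp only [he2]
      ring
    rw [hphi1, hphi2, ← mul_sub, abs_mul, abs_of_nonneg (by positivity : (0:ℝ) ≤ (s * σ1)⁻¹)]
    have h1 : |e1 u - σ1 / σ2 * e2 u| ≤ (e2 u - e1 u) + (1 - σ1 / σ2) * e2 u := by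
      have h2 : e1 u ≤ e2 u := hee u
      have h3 : 0 < e2 u := Real.exp_pos _
      have h4 : σ1 / σ2 ≤ 1 := (div_le_one hσ2).2 h12
      have h5 : 0 < σ1 / σ2 := by positivity
      rw [abs_le]
      constructor <;> nlinarith
    calc (s * σ1)⁻¹ * |e1 u - σ1 / σ2 * e2 u|
        ≤ (s * σ1)⁻¹ * ((e2 u - e1 u) + (1 - σ1 / σ2) * e2 u) :=
          mul_le_mul_of_nonneg_left h1 (by positivity)
      _ = (s * σ1)⁻¹ * (e2 u - e1 u) + (s * σ1)⁻¹ * (1 - σ1 / σ2) * e2 u := by ring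
  have hgint1 : Integrable (fun u => (s * σ1)⁻¹ * (e2 u - e1 u)) :=
    (hint2.sub hint1).const_mul _
  have hgint2 : Integrable (fun u => (s * σ1)⁻¹ * (1 - σ1 / σ2) * e2 u) :=
    hint2.const_mul _
  have habs : Integrable (fun u => |phi σ1 u - phi σ2 u|) :=
    ((integrable_phi hσ1).sub (integrable_phi hσ2)).abs
  calc ∫ u : ℝ, |phi σ1 u - phi σ2 u|
      ≤ ∫ u : ℝ, ((s * σ1)⁻¹ * (e2 u - e1 u) + (s * σ1)⁻¹ * (1 - σ1 / σ2) * e2 u) :=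
        integral_mono habs (hgint1.add hgint2) hpt
    _ = (s * σ1)⁻¹ * ((s * σ2) - (s * σ1)) + (s * σ1)⁻¹ * (1 - σ1 / σ2) * (s * σ2) := by
        rw [integral_add hgint1 hgint2, integral_const_mul, integral_const_mul,
          integral_sub hint2 hint1, he1, he2, integral_exp_gauss hσ1, integral_exp_gauss hσ2,
          hs]
    _ = 2 * (σ2 - σ1) / σ1 := by
        field_simp
        ring

lemma setIntegral_Iic_phi_sub (σ c a : ℝ) :
    ∫ y in Iic c, phi σ (y - a) = ∫ y in Iic (c - a), phi σ y := by
  rw [← integral_indicator measurableSet_Iic, ← integral_indicator measurableSet_Iic]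
  have h : (fun y => (Iic c).indicator (fun t => phi σ (t - a)) y)
      = fun y => (Iic (c - a)).indicator (phi σ) (y - a) := by
    funext y
    by_cases hy : y ≤ c
    · rw [indicator_of_mem (mem_Iic.2 hy), indicator_of_mem (mem_Iic.2 (by linarith))]
    · rw [indicator_of_notMem (fun h => hy (mem_Iic.1 h)),
        indicator_of_notMem (fun h => hy (by have := mem_Iic.1 h; linarith))]
  rw [h, integral_sub_right_eq_self (fun y => (Iic (c - a)).indicator (phi σ) y) a]

lemma sqrt_two_div_pi_eq : Real.sqrt (2 / Real.pi) = 2 / Real.sqrt (2 * Real.pi) := by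
  rw [eq_div_iff (by positivity : Real.sqrt (2 * Real.pi) ≠ 0), ← Real.sqrt_mul (by positivity)]
  rw [show 2 / Real.pi * (2 * Real.pi) = 2 ^ 2 by field_simp]
  exact Real.sqrt_sq (by norm_num)

lemma lemA {σ : ℝ} (hσ : 0 < σ) {a b : ℝ} (hab : a ≤ b) :
    ∫ y : ℝ, |phi σ (y - a) - phi σ (y - b)| ≤ Real.sqrt (2 / Real.pi) * (b - a) / σ := by
  set m := (a + b) / 2 with hm
  set D : ℝ → ℝ := fun y => phi σ (y - a) - phi σ (y - b) with hD
  have hfa : Integrable (fun y : ℝ => phi σ (y - a)) := (integrable_phi hσ).comp_sub_right a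
  have hfb : Integrable (fun y : ℝ => phi σ (y - b)) := (integrable_phi hσ).comp_sub_right b
  have hDi : Integrable D := hfa.sub hfb
  have hsign1 : ∀ y ≤ m, 0 ≤ D y := by
    intro y hy
    have : phi σ (y - b) ≤ phi σ (y - a) := phi_anti hσ (by nlinarith)
    simpa [hD] using sub_nonneg.2 this
  have hsign2 : ∀ y, m ≤ y → D y ≤ 0 := by
    intro y hy
    have : phi σ (y - a) ≤ phi σ (y - b) := phi_anti hσ (by nlinarith)
    simpa [hD] using sub_nonpos.2 this
  have hmax : (fun y => max (D y) 0) = fun y => (Iic m).indicator D y := by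
    funext y
    by_cases hy : y ≤ m
    · rw [indicator_of_mem (mem_Iic.2 hy), max_eq_left (hsign1 y hy)]
    · rw [indicator_of_notMem (fun h => hy (mem_Iic.1 h)),
        max_eq_right (hsign2 y (le_of_not_ge hy))]
  have habs : (fun y => |D y|) = fun y => 2 * max (D y) 0 - D y := by
    funext y
    rcases le_or_gt 0 (D y) with h | h
    · rw [abs_of_nonneg h, max_eq_left h]; ring
    · rw [abs_of_neg h, max_eq_right h.le]; ring
  have hDint : ∫ y, D y = 0 := by
    rw [hD, integral_sub hfa hfb, integral_sub_right_eq_self (phi σ) a,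
      integral_sub_right_eq_self (phi σ) b, sub_self]
  have hmaxint : ∫ y, max (D y) 0 = ∫ y in Ioc (-(b - a) / 2) ((b - a) / 2), phi σ y := by
    rw [hmax, integral_indicator measurableSet_Iic]
    have hsub : ∫ y in Iic m, D y
        = (∫ y in Iic m, phi σ (y - a)) - ∫ y in Iic m, phi σ (y - b) := by
      simp only [hD]
      exact integral_sub hfa.integrableOn hfb.integrableOn
    have e1 : m - a = (b - a) / 2 := by rw [hm]; ring
    have e2 : m - b = -(b - a) / 2 := by rw [hm]; ring
    rw [hsub, setIntegral_Iic_phi_sub σ m a, setIntegral_Iic_phi_sub σ m b, e1, e2,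
      intervalIntegral.integral_Iic_sub_Iic ((integrable_phi hσ).integrableOn)
        ((integrable_phi hσ).integrableOn),
      intervalIntegral.integral_of_le (by linarith : -(b - a) / 2 ≤ (b - a) / 2)]
  have hIoc : ∫ y in Ioc (-(b - a) / 2) ((b - a) / 2), phi σ y ≤ (b - a) * phi σ 0 := by
    calc ∫ y in Ioc (-(b - a) / 2) ((b - a) / 2), phi σ y
        ≤ ∫ _ in Ioc (-(b - a) / 2) ((b - a) / 2), phi σ 0 := by
          apply setIntegral_mono_on ((integrable_phi hσ).integrableOn)
            (integrableOn_const (by rw [Real.volume_Ioc]; exact ENNReal.ofReal_ne_top))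
            measurableSet_Ioc
          intro y _
          exact phi_le_zero hσ y
      _ = (b - a) * phi σ 0 := by
          rw [setIntegral_const, Real.volume_real_Ioc_of_le (by linarith), smul_eq_mul]
          congr 1
          ring
  have hphi0 : phi σ 0 = (Real.sqrt (2 * Real.pi) * σ)⁻¹ := by
    rw [phi, sqrt_two_pi_sq hσ.le]
    norm_num
  have habsint : Integrable (fun y => |D y|) := hDi.abs
  calc ∫ y, |D y| = ∫ y, (2 * max (D y) 0 - D y) := by rw [habs]
    _ = (2 * ∫ y, max (D y) 0) - ∫ y, D y := by
        rw [integral_sub ((hDi.pos_part).const_mul 2) hDi, integral_const_mul]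
    _ ≤ 2 * ((b - a) * phi σ 0) - 0 := by
        rw [hDint, hmaxint]
        exact sub_le_sub_right (by linarith [hIoc]) 0
    _ = Real.sqrt (2 / Real.pi) * (b - a) / σ := by
        rw [hphi0, sqrt_two_div_pi_eq, sub_zero]
        have h1 : Real.sqrt (2 * Real.pi) ≠ 0 := by positivity
        field_simp

lemma lemA' {σ : ℝ} (hσ : 0 < σ) (a b : ℝ) :
    ∫ y : ℝ, |phi σ (y - a) - phi σ (y - b)| ≤ Real.sqrt (2 / Real.pi) * |a - b| / σ := by
  rcases le_total a b with hab | hab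
  · rw [abs_of_nonpos (by linarith), neg_sub]
    exact lemA hσ hab
  · rw [abs_of_nonneg (by linarith)]
    calc ∫ y : ℝ, |phi σ (y - a) - phi σ (y - b)|
        = ∫ y : ℝ, |phi σ (y - b) - phi σ (y - a)| := by
          congr 1; funext y; rw [abs_sub_comm]
      _ ≤ Real.sqrt (2 / Real.pi) * (a - b) / σ := lemA hσ hab

lemma sliceL1 {σ1 σ2 : ℝ} (hσ1 : 0 < σ1) (h12 : σ1 ≤ σ2) (a b : ℝ) :
    ∫ y : ℝ, |phi σ1 (y - a) - phi σ2 (y - b)| ≤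
      Real.sqrt (2 / Real.pi) * |a - b| / σ1 + 2 * (σ2 - σ1) / σ1 := by
  have hσ2 : 0 < σ2 := hσ1.trans_le h12
  have hi1 : Integrable (fun y : ℝ => phi σ1 (y - a)) := (integrable_phi hσ1).comp_sub_right a
  have hi2 : Integrable (fun y : ℝ => phi σ1 (y - b)) := (integrable_phi hσ1).comp_sub_right b
  have hi3 : Integrable (fun y : ℝ => phi σ2 (y - b)) := (integrable_phi hσ2).comp_sub_right b
  have hpt : ∀ y : ℝ, |phi σ1 (y - a) - phi σ2 (y - b)| ≤
      |phi σ1 (y - a) - phi σ1 (y - b)| + |phi σ1 (y - b) - phi σ2 (y - b)| := by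
    intro y
    exact abs_sub_le _ _ _
  calc ∫ y : ℝ, |phi σ1 (y - a) - phi σ2 (y - b)|
      ≤ ∫ y : ℝ, (|phi σ1 (y - a) - phi σ1 (y - b)| + |phi σ1 (y - b) - phi σ2 (y - b)|) :=
        integral_mono ((hi1.sub hi3).abs) (((hi1.sub hi2).abs).add ((hi2.sub hi3).abs)) hpt
    _ = (∫ y : ℝ, |phi σ1 (y - a) - phi σ1 (y - b)|)
        + ∫ y : ℝ, |phi σ1 (y - b) - phi σ2 (y - b)| :=
        integral_add ((hi1.sub hi2).abs) ((hi2.sub hi3).abs)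
    _ ≤ Real.sqrt (2 / Real.pi) * |a - b| / σ1 + 2 * (σ2 - σ1) / σ1 := by
        apply add_le_add (lemA' hσ1 a b)
        calc ∫ y : ℝ, |phi σ1 (y - b) - phi σ2 (y - b)|
            = ∫ u : ℝ, |phi σ1 u - phi σ2 u| :=
              integral_sub_right_eq_self (fun u => |phi σ1 u - phi σ2 u|) b
          _ ≤ 2 * (σ2 - σ1) / σ1 := lemB hσ1 h12

/-- L¹ bound:
`‖f_{μ₁,σ₁} - f_{μ₂,σ₂}‖₁ ≤ √(2/π) ‖μ₁-μ₂‖_∞/σ₁ + 3(σ₂-σ₁)/σ₁`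
for `0 < σ₁ ≤ σ₂`, where `M` is any sup-norm bound on `μ₁ - μ₂` over `[0,1]`. -/
theorem L1_dist_fdens_le
    (μ1 μ2 : ℝ → ℝ)
    (h1 : ContinuousOn μ1 (Set.Icc 0 1)) (h2 : ContinuousOn μ2 (Set.Icc 0 1))
    (σ1 σ2 : ℝ) (hσ1 : 0 < σ1) (hσ12 : σ1 ≤ σ2)
    (M : ℝ) (hM : ∀ x ∈ Set.Icc (0:ℝ) 1, |μ1 x - μ2 x| ≤ M) :
    (∫ y, |fdens μ1 σ1 y - fdens μ2 σ2 y|) ≤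
      Real.sqrt (2 / Real.pi) * M / σ1 + 3 * (σ2 - σ1) / σ1 := by
  

  have hσ2 : 0 < σ2 := hσ1.trans_le hσ12
  have hM0 : 0 ≤ M := le_trans (abs_nonneg _) (hM 0 (by constructor <;> norm_num))
  set g1 : ℝ → ℝ := fun x => (Set.Icc (0:ℝ) 1).restrict μ1 (Set.projIcc 0 1 zero_le_one x)
    with hg1
  set g2 : ℝ → ℝ := fun x => (Set.Icc (0:ℝ) 1).restrict μ2 (Set.projIcc 0 1 zero_le_one x)
    with hg2
  have hg1c : Continuous g1 := (h1.restrict).comp continuous_projIcc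
  have hg2c : Continuous g2 := (h2.restrict).comp continuous_projIcc
  have hg1e : ∀ x ∈ Set.Icc (0:ℝ) 1, g1 x = μ1 x := by
    intro x hx
    simp [hg1, Set.projIcc_of_mem zero_le_one hx]
    rfl
  have hg2e : ∀ x ∈ Set.Icc (0:ℝ) 1, g2 x = μ2 x := by
    intro x hx
    simp [hg2, Set.projIcc_of_mem zero_le_one hx]
    rfl
  set ν : Measure ℝ := volume.restrict (Set.Icc (0:ℝ) 1) with hν
  haveI : IsFiniteMeasure ν := by
    constructor
    rw [hν, Measure.restrict_apply_univ]
    exact isCompact_Icc.measure_lt_top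
  set F : ℝ → ℝ → ℝ := fun x y => |phi σ1 (y - g1 x) - phi σ2 (y - g2 x)| with hF
  have hFc : Continuous (Function.uncurry F) := by
    apply Continuous.abs
    exact ((phi_cont σ1).comp (continuous_snd.sub (hg1c.comp continuous_fst))).sub
      ((phi_cont σ2).comp (continuous_snd.sub (hg2c.comp continuous_fst)))
  have hyint : ∀ x, Integrable (fun y => F x y) := fun x =>
    (((integrable_phi hσ1).comp_sub_right (g1 x)).sub
      ((integrable_phi hσ2).comp_sub_right (g2 x))).abs
  have hbound2 : ∀ x, ∫ y, F x y ≤ 2 := by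
    intro x
    have hpa : Integrable (fun y : ℝ => phi σ1 (y - g1 x)) :=
      (integrable_phi hσ1).comp_sub_right (g1 x)
    have hpb : Integrable (fun y : ℝ => phi σ2 (y - g2 x)) :=
      (integrable_phi hσ2).comp_sub_right (g2 x)
    calc ∫ y, F x y ≤ ∫ y, (phi σ1 (y - g1 x) + phi σ2 (y - g2 x)) := by
          apply integral_mono (hyint x) (hpa.add hpb)
          intro y
          calc |phi σ1 (y - g1 x) - phi σ2 (y - g2 x)|
              ≤ |phi σ1 (y - g1 x)| + |phi σ2 (y - g2 x)| := abs_sub _ _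
            _ = phi σ1 (y - g1 x) + phi σ2 (y - g2 x) := by
                rw [abs_of_nonneg (phi_nonneg _ _), abs_of_nonneg (phi_nonneg _ _)]
      _ = 2 := by
          rw [integral_add hpa hpb, integral_sub_right_eq_self (phi σ1) (g1 x),
            integral_sub_right_eq_self (phi σ2) (g2 x), integral_phi hσ1, integral_phi hσ2]
          norm_num
  have hFint : Integrable (Function.uncurry F) (ν.prod volume) := by
    rw [integrable_prod_iff hFc.aestronglyMeasurable]
    constructor
    · exact Filter.Eventually.of_forall fun x => hyint x
    · have heq : (fun x => ∫ y, ‖Function.uncurry F (x, y)‖) = fun x => ∫ y, F x y := by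
        funext x
        congr 1
        funext y
        simp only [Function.uncurry_apply_pair, hF]
        rw [Real.norm_eq_abs, abs_of_nonneg (abs_nonneg _)]
      rw [heq]
      apply Integrable.mono' (integrable_const 2)
        (hFc.stronglyMeasurable.integral_prod_right'.aestronglyMeasurable)
      apply Filter.Eventually.of_forall
      intro x
      have hnn : (0:ℝ) ≤ ∫ y, Function.uncurry F (x, y) :=
        integral_nonneg fun y => by
          simp only [Function.uncurry_apply_pair, hF]; positivity
      rw [Real.norm_eq_abs, abs_of_nonneg hnn]
      simpa only [Function.uncurry_apply_pair] using hbound2 x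
  have hIic1 : ∀ y : ℝ, IntegrableOn (fun x => phi σ1 (y - g1 x)) (Set.Icc (0:ℝ) 1) := by
    intro y
    exact (((phi_cont σ1).comp ((continuous_const).sub hg1c))).integrableOn_Icc
  have hIic2 : ∀ y : ℝ, IntegrableOn (fun x => phi σ2 (y - g2 x)) (Set.Icc (0:ℝ) 1) := by
    intro y
    exact (((phi_cont σ2).comp ((continuous_const).sub hg2c))).integrableOn_Icc
  have hfd1 : ∀ y, fdens μ1 σ1 y = ∫ x in Set.Icc (0:ℝ) 1, phi σ1 (y - g1 x) := by
    intro y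
    exact setIntegral_congr_fun measurableSet_Icc (fun x hx => by rw [hg1e x hx])
  have hfd2 : ∀ y, fdens μ2 σ2 y = ∫ x in Set.Icc (0:ℝ) 1, phi σ2 (y - g2 x) := by
    intro y
    exact setIntegral_congr_fun measurableSet_Icc (fun x hx => by rw [hg2e x hx])
  have step1 : ∀ y, |fdens μ1 σ1 y - fdens μ2 σ2 y| ≤ ∫ x, F x y ∂ν := by
    intro y
    rw [hfd1 y, hfd2 y, ← integral_sub (hIic1 y) (hIic2 y)]
    simpa [Real.norm_eq_abs] using
      norm_integral_le_integral_norm (μ := ν)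
        (fun x => phi σ1 (y - g1 x) - phi σ2 (y - g2 x))
  set C0 : ℝ := Real.sqrt (2 / Real.pi) * M / σ1 + 2 * (σ2 - σ1) / σ1 with hC0
  have hsliceM : ∀ x ∈ Set.Icc (0:ℝ) 1, ∫ y, F x y ≤ C0 := by
    intro x hx
    calc ∫ y, F x y
        ≤ Real.sqrt (2 / Real.pi) * |g1 x - g2 x| / σ1 + 2 * (σ2 - σ1) / σ1 :=
          sliceL1 hσ1 hσ12 (g1 x) (g2 x)
      _ ≤ C0 := by
          rw [hC0]
          have hMx : |g1 x - g2 x| ≤ M := by rw [hg1e x hx, hg2e x hx]; exact hM x hx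
          gcongr
  calc (∫ y, |fdens μ1 σ1 y - fdens μ2 σ2 y|)
      ≤ ∫ y, ∫ x, F x y ∂ν :=
        integral_mono_of_nonneg (Filter.Eventually.of_forall fun y => abs_nonneg _)
          hFint.integral_prod_right (Filter.Eventually.of_forall step1)
    _ = ∫ x, (∫ y, F x y) ∂ν := (integral_integral_swap hFint).symm
    _ ≤ ∫ _x, C0 ∂ν := by
        apply integral_mono_of_nonneg
          (Filter.Eventually.of_forall fun x => integral_nonneg fun y => abs_nonneg _)
          (integrable_const C0)
        exact (ae_restrict_iff' measurableSet_Icc).2 (Filter.Eventually.of_forall hsliceM)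
    _ = C0 := by
        rw [integral_const, hν, measureReal_restrict_apply_univ, Real.volume_real_Icc]
        norm_num
    _ ≤ Real.sqrt (2 / Real.pi) * M / σ1 + 3 * (σ2 - σ1) / σ1 := by
        rw [hC0]
        have key : 2 * (σ2 - σ1) / σ1 ≤ 3 * (σ2 - σ1) / σ1 := by
          gcongr
          · linarith
        linarith
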